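/- The permutation w = [a_1, b_1, a_2, b_2, ..., a_k, b_k] (in one-line notation) always lies in the W-set of the fixed-point free involution π' = (a_1,b_1)...(a_k,b_k) written in standard form; that is, m(w)·α' = π' and ℓ(w) = L'(π'), where α' = (1,2)(3,4)···(2k−1,2k). -/

import Mathlib

/-- The number of inversions (Coxeter length) of a permutation of `Fin n`. -/
def invNum {n : ℕ} (w : Equiv.Perm (Fin n)) : ℕ :=
  (Finset.univ.filter fun p : Fin n × Fin n => p.1 < p.2 ∧ w p.2 < w p.1).card

/-- The simple transposition `s_i = (i, i+1)` (0-indexed) in `S_n`, or `1` if out of range. -/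
def sNat (n i : ℕ) : Equiv.Perm (Fin n) :=
  if h : i + 1 < n then Equiv.swap ⟨i, Nat.lt_of_succ_lt h⟩ ⟨i + 1, h⟩ else 1

/-- The Richardson–Springer monoid action of `m(s_i)` on fixed-point free involutions:
`s_i π s_i` if `ℓ(s_i π s_i) = ℓ(π) + 2`, and `π` otherwise. -/
def RSfpf (n i : ℕ) (π : Equiv.Perm (Fin n)) : Equiv.Perm (Fin n) :=
  if invNum (sNat n i * π * sNat n i) = invNum π + 2 then sNat n i * π * sNat n i
  else π

/-- The word `(a_1, b_1, a_2, b_2, …, a_k, b_k)` of a fixed-point free involution in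
standard form, as a function `Fin (2k) → Fin (2k)`. -/
def word (k : ℕ) (a b : Fin k → Fin (2 * k)) (j : Fin (2 * k)) : Fin (2 * k) :=
  if (j : ℕ) % 2 = 0 then a ⟨(j : ℕ) / 2, by have := j.2; omega⟩
  else b ⟨(j : ℕ) / 2, by have := j.2; omega⟩

/-- The number of inversions of the word `(a_1, b_1, …, a_k, b_k)`. -/
def invWord (k : ℕ) (a b : Fin k → Fin (2 * k)) : ℕ :=
  (Finset.univ.filter fun p : Fin (2 * k) × Fin (2 * k) =>
    p.1 < p.2 ∧ word k a b p.2 < word k a b p.1).card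

/-- The fixed-point free involution `α' = (1,2)(3,4)⋯(2k−1,2k)` of `S_{2k}`
(0-indexed: it swaps `2m` and `2m+1` for each `m`). -/
def alpha (k : ℕ) : Equiv.Perm (Fin (2 * k)) :=
  Function.Involutive.toPerm
    (fun x => ⟨2 * ((x : ℕ) / 2) + (1 - (x : ℕ) % 2), by have := x.2; omega⟩)
    (by intro x; apply Fin.ext; simp only [Fin.val_mk]; omega)

lemma swap_val {n : ℕ} {fi fi1 : Fin n} (z : Fin n) :
    ((Equiv.swap fi fi1 z : Fin n) : ℕ) =
      if (z:ℕ) = (fi:ℕ) then (fi1:ℕ) else if (z:ℕ) = (fi1:ℕ) then (fi:ℕ) else (z:ℕ) := by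
  rcases eq_or_ne z fi with rfl | h1
  · simp [Equiv.swap_apply_left]
  · rcases eq_or_ne z fi1 with rfl | h2
    · rw [Equiv.swap_apply_right, if_neg (fun e => h1 (Fin.ext e)), if_pos rfl]
    · rw [Equiv.swap_apply_of_ne_of_ne h1 h2,
        if_neg (fun e => h1 (Fin.ext e)), if_neg (fun e => h2 (Fin.ext e))]

lemma swap_lt_iff {n : ℕ} {fi fi1 : Fin n} (h : (fi:ℕ) + 1 = (fi1:ℕ))
    {x y : Fin n} (hx : ¬(x = fi ∧ y = fi1)) (hy : ¬(x = fi1 ∧ y = fi)) :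
    Equiv.swap fi fi1 x < Equiv.swap fi fi1 y ↔ x < y := by
  have hx' : ¬((x:ℕ) = fi ∧ (y:ℕ) = fi1) := fun ⟨e1, e2⟩ => hx ⟨Fin.ext e1, Fin.ext e2⟩
  have hy' : ¬((x:ℕ) = fi1 ∧ (y:ℕ) = fi) := fun ⟨e1, e2⟩ => hy ⟨Fin.ext e1, Fin.ext e2⟩
  rw [Fin.lt_def, Fin.lt_def, swap_val x, swap_val y]
  split_ifs <;> omega

lemma invNum_one {n : ℕ} : invNum (1 : Equiv.Perm (Fin n)) = 0 := by
  rw [invNum, Finset.card_eq_zero, Finset.filter_eq_empty_iff]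
  rintro p -
  simp only [Equiv.Perm.one_apply, not_and]
  exact fun h1 h2 => absurd h2 (asymm h1)

lemma invNum_inv {n : ℕ} (u : Equiv.Perm (Fin n)) : invNum u⁻¹ = invNum u := by
  rw [invNum, invNum]
  apply Finset.card_bij' (fun r _ => (u⁻¹ r.2, u⁻¹ r.1)) (fun r _ => (u r.2, u r.1)) <;>
    simp (config := {contextual := true}) [and_comm]

lemma invNum_swap_mul_left {n : ℕ} {fi fi1 : Fin n} (h : (fi:ℕ) + 1 = (fi1:ℕ))
    (u : Equiv.Perm (Fin n)) {p q : Fin n} (hpq : p < q)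
    (hp : u p = fi1) (hq : u q = fi) :
    invNum (Equiv.swap fi fi1 * u) + 1 = invNum u := by
  classical
  set s := Equiv.swap fi fi1 with hs
  have hflt : fi < fi1 := Fin.lt_def.2 (by omega)
  have hnot : (p, q) ∉ Finset.univ.filter
      (fun r : Fin n × Fin n => r.1 < r.2 ∧ (s * u) r.2 < (s * u) r.1) := by
    rw [Finset.mem_filter]
    simp only [Finset.mem_filter, Finset.mem_univ, true_and, Equiv.Perm.mul_apply,
      hp, hq, not_and]
    intro _
    rw [hs, Equiv.swap_apply_left, Equiv.swap_apply_right]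
    exact asymm hflt
  have hins : (Finset.univ.filter
      fun r : Fin n × Fin n => r.1 < r.2 ∧ u r.2 < u r.1) =
      insert (p, q) (Finset.univ.filter
      (fun r : Fin n × Fin n => r.1 < r.2 ∧ (s * u) r.2 < (s * u) r.1)) := by
    ext r
    rw [Finset.mem_insert, Finset.mem_filter, Finset.mem_filter]
    simp only [Finset.mem_insert, Finset.mem_filter, Finset.mem_univ, true_and,
      Equiv.Perm.mul_apply]
    constructor
    · rintro ⟨h12, hlt⟩
      by_cases hr : r = (p, q)
      · exact Or.inl hr
      · refine Or.inr ⟨h12, ?_⟩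
        have hX : ¬(u r.2 = fi ∧ u r.1 = fi1) := by
          rintro ⟨e1, e2⟩
          exact hr (Prod.ext (u.injective (e2.trans hp.symm)) (u.injective (e1.trans hq.symm)))
        have hY : ¬(u r.2 = fi1 ∧ u r.1 = fi) := by
          rintro ⟨e1, e2⟩
          have h1 : r.1 = q := u.injective (e2.trans hq.symm)
          have h2 : r.2 = p := u.injective (e1.trans hp.symm)
          rw [h1, h2] at h12
          exact absurd hpq (asymm h12)
        exact (swap_lt_iff h hX hY).mpr hlt
    · rintro (rfl | ⟨h12, hlt⟩)
      · exact ⟨hpq, by rw [hp, hq]; exact hflt⟩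
      · refine ⟨h12, ?_⟩
        have hX : ¬(u r.2 = fi ∧ u r.1 = fi1) := by
          rintro ⟨e1, e2⟩
          rw [e1, e2, hs, Equiv.swap_apply_left, Equiv.swap_apply_right] at hlt
          exact absurd hlt (asymm hflt)
        have hY : ¬(u r.2 = fi1 ∧ u r.1 = fi) := by
          rintro ⟨e1, e2⟩
          have h1 : r.1 = q := u.injective (e2.trans hq.symm)
          have h2 : r.2 = p := u.injective (e1.trans hp.symm)
          rw [h1, h2] at h12
          exact absurd hpq (asymm h12)
        exact (swap_lt_iff h hX hY).mp hlt
  rw [invNum, invNum, hins, Finset.card_insert_of_notMem hnot]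

lemma invNum_mul_swap_dec {n : ℕ} {fi fi1 : Fin n} (h : (fi:ℕ) + 1 = (fi1:ℕ))
    (u : Equiv.Perm (Fin n)) (hlt : u fi1 < u fi) :
    invNum (u * Equiv.swap fi fi1) + 1 = invNum u := by
  rw [← invNum_inv (u * Equiv.swap fi fi1), mul_inv_rev, Equiv.swap_inv, ← invNum_inv u]
  exact invNum_swap_mul_left h u⁻¹ hlt (by simp) (by simp)

lemma wordA (k : ℕ) (a b : Fin k → Fin (2 * k)) (m : Fin k) :
    word k a b ⟨2 * m.val, by have := m.2; omega⟩ = a m := by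
  simp only [word, Fin.val_mk]
  rw [if_pos (by omega)]
  apply congrArg
  apply Fin.ext
  simp only [Fin.val_mk]
  omega

lemma wordB (k : ℕ) (a b : Fin k → Fin (2 * k)) (m : Fin k) :
    word k a b ⟨2 * m.val + 1, by have := m.2; omega⟩ = b m := by
  simp only [word, Fin.val_mk]
  rw [if_neg (by omega)]
  apply congrArg
  apply Fin.ext
  simp only [Fin.val_mk]
  omega

lemma alpha_val (k : ℕ) (x : Fin (2 * k)) :
    ((alpha k x : Fin (2 * k)) : ℕ) = 2 * ((x : ℕ) / 2) + (1 - (x : ℕ) % 2) := by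
  simp [alpha]
  rfl

lemma main_aux (k N : ℕ) :
    ∀ (π : Equiv.Perm (Fin (2 * k))) (a b : Fin k → Fin (2 * k)) (w : Equiv.Perm (Fin (2 * k))),
      invNum w = N → π * π = 1 → (∀ x, π x ≠ x) → (∀ i, a i < b i) → StrictMono a →
      (∀ i, π (a i) = b i) → (∀ j, w j = word k a b j) →
      ∃ l : List ℕ, (l.map (sNat (2 * k))).prod = w ∧ l.length = invNum w ∧
        l.foldr (RSfpf (2 * k)) (alpha k) = π := by
  induction N using Nat.strong_induction_on with
  | _ N IH =>
  intro π a b w hN hπ hfpf hab hmono hpair hw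
  have hππ : ∀ y, π (π y) = y := fun y => by
    rw [← Equiv.Perm.mul_apply, hπ, Equiv.Perm.one_apply]
  have hπb : ∀ m, π (b m) = a m := fun m => by rw [← hpair, hππ]
  have inj : Function.Injective (word k a b) := fun x y hxy =>
    w.injective (by rw [hw, hw, hxy])
  have cover : ∀ x : Fin (2 * k), ∃ m, a m = x ∨ b m = x := by
    intro x
    obtain ⟨j, hj⟩ := w.surjective x
    rw [hw, word] at hj
    split_ifs at hj
    · exact ⟨_, Or.inl hj⟩
    · exact ⟨_, Or.inr hj⟩
  have hab_ne : ∀ m1 m2, a m1 ≠ b m2 := by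
    intro m1 m2 hcon
    have h1 := (wordA k a b m1).trans (hcon.trans (wordB k a b m2).symm)
    have h2 := inj h1
    have h3 : 2 * m1.val = 2 * m2.val + 1 := congrArg Fin.val h2
    omega
  set Sf := Finset.univ.filter
    (fun x : Fin (2*k) => π x < x ∧ ((π x):ℕ) + 1 ≠ (x:ℕ)) with hSf
  rcases Sf.eq_empty_or_nonempty with hSe | hSne
  · -- S empty : w = 1, π = alpha
    have hSall : ∀ x : Fin (2*k), π x < x → ((π x):ℕ) + 1 = (x:ℕ) := by
      intro x h1
      by_contra h2
      have : x ∈ Sf := by rw [hSf, Finset.mem_filter]; exact ⟨Finset.mem_univ x, h1, h2⟩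
      rw [hSe] at this
      exact absurd this (Finset.notMem_empty x)
    have hb1 : ∀ m, ((b m):ℕ) = ((a m):ℕ) + 1 := by
      intro m
      have h1 := hSall (b m) (by rw [hπb]; exact hab m)
      rw [hπb] at h1
      omega
    have key : ∀ m, ∀ hm : m < k, ((a ⟨m, hm⟩ : Fin (2*k)):ℕ) = 2 * m := by
      intro m
      induction m with
      | zero =>
        intro hm
        obtain ⟨m0, hm0⟩ := cover ⟨0, by omega⟩
        rcases hm0 with h0 | h0
        · have h1 : a ⟨0, hm⟩ ≤ a m0 := hmono.monotone (by simp [Fin.le_def])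
          have h2 : ((a m0):ℕ) = 0 := congrArg Fin.val h0
          have h3 := Fin.le_def.1 h1
          omega
        · have h2 : ((b m0):ℕ) = 0 := congrArg Fin.val h0
          have := hb1 m0
          omega
      | succ m ihm =>
        intro hm
        have hm' : m < k := by omega
        have ham : ((a ⟨m, hm'⟩ : Fin (2*k)):ℕ) = 2*m := ihm hm'
        have hbm : ((b ⟨m, hm'⟩ : Fin (2*k)):ℕ) = 2*m+1 := by rw [hb1]; omega
        obtain ⟨j, hj⟩ := cover ⟨2*m+2, by omega⟩
        rcases hj with h0 | h0
        · have hv : ((a j):ℕ) = 2*m+2 := congrArg Fin.val h0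
          have hjge : (⟨m, hm'⟩ : Fin k) < j := by
            by_contra hle
            push_neg at hle
            have h5 := Fin.le_def.1 (hmono.monotone hle)
            omega
          have hle2 := Fin.le_def.1
            (hmono.monotone (show (⟨m+1, hm⟩ : Fin k) ≤ j from
              Fin.le_def.2 (by have h9 := Fin.lt_def.1 hjge
                               simp only [Fin.val_mk] at h9 ⊢
                               omega)))
          have hgt := Fin.lt_def.1 (hmono (show (⟨m, hm'⟩ : Fin k) < ⟨m+1, hm⟩ from
            Fin.lt_def.2 (by simp)))
          have hne : ((a ⟨m+1, hm⟩ : Fin (2*k)):ℕ) ≠ 2*m+1 := by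
            intro he
            exact hab_ne ⟨m+1, hm⟩ ⟨m, hm'⟩ (Fin.ext (by omega))
          omega
        · exfalso
          have hv : ((b j):ℕ) = 2*m+2 := congrArg Fin.val h0
          have h5 := hb1 j
          exact hab_ne j ⟨m, hm'⟩ (Fin.ext (by omega))
    have hkey' : ∀ m : Fin k, ((a m):ℕ) = 2*m.val := fun m => key m.val m.2
    have hbkey : ∀ m : Fin k, ((b m):ℕ) = 2*m.val+1 := fun m => by
      rw [hb1, hkey']
    have hwid : ∀ j, w j = j := by
      intro j
      rw [hw, word]
      split_ifs with hj
      · exact Fin.ext (by rw [hkey']; simp; omega)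
      · exact Fin.ext (by rw [hbkey]; simp; omega)
    have hw1 : w = 1 := Equiv.ext fun j => by rw [hwid]; rfl
    have hπα : π = alpha k := by
      apply Equiv.ext
      intro x
      obtain ⟨m, hm⟩ := cover x
      apply Fin.ext
      rw [alpha_val]
      have h1 := hkey' m
      have h2 := hbkey m
      rcases hm with h0 | h0
      · have hx : ((a m):ℕ) = (x:ℕ) := congrArg Fin.val h0
        rw [← h0, hpair]
        omega
      · have hx : ((b m):ℕ) = (x:ℕ) := congrArg Fin.val h0
        rw [← h0, hπb]
        omega
    exact ⟨[], by simp [hw1], by simp [hw1, invNum_one], by simpa using hπα.symm⟩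
  · -- S nonempty : inductive step
    set x := Sf.min' hSne with hxdef
    have hxmem : x ∈ Sf := Sf.min'_mem hSne
    have hmin : ∀ y ∈ Sf, x ≤ y := fun y hy => Finset.min'_le _ _ hy
    rw [hSf, Finset.mem_filter] at hxmem
    obtain ⟨-, hπxlt, hπxne⟩ := hxmem
    have hπxval : ((π x):ℕ) < (x:ℕ) := Fin.lt_def.1 hπxlt
    have hx2 : 2 ≤ (x:ℕ) := by omega
    set i := (x:ℕ) - 1 with hidef
    have hi : i + 1 < 2*k := by have := x.2; omega
    have hxi : (x:ℕ) = i + 1 := by omega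
    set fi : Fin (2*k) := ⟨i, by omega⟩ with hfi
    set fi1 : Fin (2*k) := ⟨i+1, hi⟩ with hfi1
    have hfx : fi1 = x := Fin.ext (by rw [hfi1]; exact hxi.symm)
    set s := Equiv.swap fi fi1 with hs
    have hconsec : (fi:ℕ) + 1 = (fi1:ℕ) := rfl
    have hss : s * s = 1 := Equiv.swap_mul_self _ _
    have hπx_ne_fi : π x ≠ fi := by
      intro he
      apply hπxne
      rw [he]
      omega
    have hπfi_ne : π fi ≠ fi1 := by
      intro he
      apply hπx_ne_fi
      rw [← hfx, ← he, hππ]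
    have hπfi_gt : π x < π fi := by
      rcases lt_or_ge (π fi) fi with hlt | hge
      · have hfieq : ((π fi):ℕ) + 1 = i := by
          by_contra hne2
          have hmem : fi ∈ Sf := by
            rw [hSf, Finset.mem_filter]
            exact ⟨Finset.mem_univ _, hlt, by simpa using hne2⟩
          have h6 := Fin.le_def.1 (hmin fi hmem)
          simp [hfi] at h6
          omega
        have hπxfi : ((π x):ℕ) ≠ ((π fi):ℕ) := by
          intro he
          have h7 : π x = π fi := Fin.ext he
          have h8 : x = fi := π.injective h7
          have := congrArg Fin.val h8
          omega
        exact Fin.lt_def.2 (by omega)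
      · have h1 : ((π fi):ℕ) ≠ i := fun he => hfpf fi (Fin.ext (by simpa using he))
        have h2 : ((π fi):ℕ) ≠ i + 1 := by
          intro he
          exact hπfi_ne (Fin.ext (by simpa using he))
        have h3 := Fin.le_def.1 hge
        simp only [hfi] at h3
        exact Fin.lt_def.2 (by omega)
    have hπfigtv : ((π x):ℕ) < ((π fi):ℕ) := Fin.lt_def.1 hπfi_gt
    have hπxi : ((π x):ℕ) < i := by omega
    obtain ⟨j', hj'⟩ := cover x
    have hbj' : b j' = x := by
      rcases hj' with h0 | h0
      · exfalso
        rw [← h0, hpair] at hπxlt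
        exact absurd hπxlt (asymm (hab j'))
      · exact h0
    have haj' : a j' = π x := by rw [← hbj', hπb]
    have hp : w ⟨2*j'.val+1, by have := j'.2; omega⟩ = fi1 := by
      rw [hw]
      exact (wordB k a b j').trans (hbj'.trans hfx.symm)
    obtain ⟨jm, hjm⟩ := cover fi
    have hdesc : invNum (s * w) + 1 = invNum w := by
      rcases hjm with h0 | h0
      · have hjlt : j' < jm := by
          apply hmono.lt_iff_lt.mp
          rw [haj', h0]
          exact Fin.lt_def.2 (by omega)
        refine invNum_swap_mul_left hconsec w
          (p := ⟨2*j'.val+1, by have := j'.2; omega⟩)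
          (q := ⟨2*jm.val, by have := jm.2; omega⟩)
          (Fin.lt_def.2 (by have := Fin.lt_def.1 hjlt; simp; omega)) hp ?_
        rw [hw]
        exact (wordA k a b jm).trans h0
      · have hjlt : j' < jm := by
          apply hmono.lt_iff_lt.mp
          rw [haj', show a jm = π fi from by rw [← h0, hπb]]
          exact hπfi_gt
        refine invNum_swap_mul_left hconsec w
          (p := ⟨2*j'.val+1, by have := j'.2; omega⟩)
          (q := ⟨2*jm.val+1, by have := jm.2; omega⟩)
          (Fin.lt_def.2 (by have := Fin.lt_def.1 hjlt; simp; omega)) hp ?_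
        rw [hw]
        exact (wordB k a b jm).trans h0
    set π₂ := s * π * s with hπ₂
    have hR : invNum (π * s) + 1 = invNum π :=
      invNum_mul_swap_dec hconsec π (by rw [hfx]; exact hπfi_gt)
    have hL : invNum (s * (π * s)) + 1 = invNum (π * s) := by
      refine invNum_swap_mul_left hconsec (π * s)
        (p := s (π fi1)) (q := s (π fi)) ?_ ?_ ?_
      · refine (swap_lt_iff hconsec ?_ ?_).mpr (by rw [hfx]; exact hπfi_gt)
        · rintro ⟨e1, e2⟩
          exact hπx_ne_fi (by rw [← hfx]; exact e1)
        · rintro ⟨e1, e2⟩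
          rw [hfx] at e1
          exact hfpf x (e1.trans hfx.symm ▸ e1)
      · simp only [Equiv.Perm.mul_apply, hs, Equiv.swap_apply_self]
        exact hππ fi1
      · simp only [Equiv.Perm.mul_apply, hs, Equiv.swap_apply_self]
        exact hππ fi
    have hlen2 : invNum π₂ + 2 = invNum π := by
      rw [hπ₂, mul_assoc]
      omega
    set a' := fun m => s (a m) with ha'
    set b' := fun m => s (b m) with hb'
    have hπ2invol : π₂ * π₂ = 1 := by
      apply Equiv.ext
      intro y
      simp only [hπ₂, Equiv.Perm.mul_apply, hs, Equiv.swap_apply_self, Equiv.Perm.one_apply, hππ]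
    have hfpf2 : ∀ y, π₂ y ≠ y := by
      intro y hy
      apply hfpf (s y)
      have h1 := congrArg s hy
      simpa only [hπ₂, Equiv.Perm.mul_apply, hs, Equiv.swap_apply_self] using h1
    have hab2 : ∀ m, a' m < b' m := by
      intro m
      refine (swap_lt_iff hconsec ?_ ?_).mpr (hab m)
      · rintro ⟨e1, e2⟩
        exact hπfi_ne (by rw [← e1, hpair, e2])
      · rintro ⟨e1, e2⟩
        have h1 := Fin.lt_def.1 (hab m)
        rw [e1, e2, hfi, hfi1] at h1
        simp only [Fin.lt_def, Fin.val_mk] at h1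
        omega
    have hmono2 : StrictMono a' := by
      intro m1 m2 h12
      refine (swap_lt_iff hconsec ?_ ?_).mpr (hmono h12)
      · rintro ⟨e1, e2⟩
        exact hab_ne m2 j' (e2.trans (hfx.trans hbj'.symm))
      · rintro ⟨e1, e2⟩
        exact hab_ne m1 j' (e1.trans (hfx.trans hbj'.symm))
    have hpair2 : ∀ m, π₂ (a' m) = b' m := by
      intro m
      simp only [hπ₂, ha', hb', Equiv.Perm.mul_apply, hs, Equiv.swap_apply_self]
      rw [hpair]
    have hw2 : ∀ j, (s * w) j = word k a' b' j := by
      intro j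
      simp only [Equiv.Perm.mul_apply, hw, word]
      split_ifs <;> rfl
    obtain ⟨l', hl1, hl2, hl3⟩ := IH (invNum (s*w)) (by omega) π₂ a' b' (s*w)
      rfl hπ2invol hfpf2 hab2 hmono2 hpair2 hw2
    have hsNat : sNat (2*k) i = s := by
      simp only [sNat]
      rw [dif_pos hi]
    refine ⟨i :: l', ?_, ?_, ?_⟩
    · rw [List.map_cons, List.prod_cons, hsNat, hl1, ← mul_assoc, hss, one_mul]
    · rw [List.length_cons, hl2]
      omega
    · rw [List.foldr_cons, hl3]
      simp only [RSfpf, hsNat]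
      have hback : s * π₂ * s = π := by
        apply Equiv.ext
        intro y
        simp only [hπ₂, Equiv.Perm.mul_apply, hs, Equiv.swap_apply_self]
      rw [hback, if_pos hlen2.symm]

/-- The permutation `w = [a_1, b_1, a_2, b_2, …, a_k, b_k]` (one-line notation) always lies
in the W-set of the fixed-point free involution `π' = (a_1,b_1)⋯(a_k,b_k)` in standard
form: `ℓ(w) = L'(π')` and `m(w)·α' = π'` via some reduced word of `w`. -/
theorem stmt13 (k : ℕ) (π : Equiv.Perm (Fin (2 * k))) (a b : Fin k → Fin (2 * k))
    (hπ : π * π = 1) (hfpf : ∀ x, π x ≠ x) (hab : ∀ i, a i < b i)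
    (hmono : StrictMono a) (hpair : ∀ i, π (a i) = b i)
    (w : Equiv.Perm (Fin (2 * k))) (hw : ∀ j, w j = word k a b j) :
    invNum w = invWord k a b ∧
    ∃ l : List ℕ, (l.map (sNat (2 * k))).prod = w ∧ l.length = invNum w ∧
      l.foldr (RSfpf (2 * k)) (alpha k) = π := by
  constructor
  · simp only [invNum, invWord, hw]
  · exact main_aux k (invNum w) π a b w rfl hπ hfpf hab hmono hpair hw
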